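/- Let K be a compact metric space and A ⊆ K be both an Fσ set and a Gδ set. Then there exists a uniformly bounded sequence (fₙ) of continuous functions on K such that for every k ∈ K there exists m with fₙ(k) = 1_A(k) for all n ≥ m; in other words, 1_A is the pointwise limit of a pointwise stabilizing sequence of continuous functions. -/

import Mathlib

open Filter

/-- If `A ⊆ K` is both `Fσ` and `Gδ` in a compact metric space `K`, then
`1_A` is the pointwise limit of a uniformly bounded, pointwise stabilizing sequence
of continuous functions. -/
theorem stmt3 {K : Type*} [MetricSpace K] [CompactSpace K] (A : Set K)
    (hFσ : ∃ F : ℕ → Set K, (∀ n, IsClosed (F n)) ∧ A = ⋃ n, F n)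
    (hGδ : ∃ G : ℕ → Set K, (∀ n, IsOpen (G n)) ∧ A = ⋂ n, G n) :
    ∃ f : ℕ → K → ℝ, (∀ n, Continuous (f n)) ∧
      (∃ C : ℝ, ∀ n k, |f n k| ≤ C) ∧
      (∀ k, ∃ m : ℕ, ∀ n ≥ m, f n k = A.indicator (fun _ => (1 : ℝ)) k) ∧
      (∀ k, Tendsto (fun n => f n k) atTop (nhds (A.indicator (fun _ => (1 : ℝ)) k))) := by
  obtain ⟨F, hFc, hFA⟩ := hFσ
  obtain ⟨G, hGo, hGA⟩ := hGδ
  have key : ∀ n : ℕ, ∃ f : C(K, ℝ),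
      Set.EqOn f 0 (⋃ i ∈ Finset.range (n+1), (G i)ᶜ) ∧
      Set.EqOn f 1 (⋃ i ∈ Finset.range (n+1), F i) ∧ ∀ x, f x ∈ Set.Icc (0:ℝ) 1 := by
    intro n
    apply exists_continuous_zero_one_of_isClosed
    · exact Set.Finite.isClosed_biUnion (Finset.finite_toSet _)
        (fun i _ => (hGo i).isClosed_compl)
    · exact Set.Finite.isClosed_biUnion (Finset.finite_toSet _) (fun i _ => hFc i)
    · rw [Set.disjoint_iff]
      rintro x ⟨hx1, hx2⟩
      simp only [Set.mem_iUnion, Set.mem_compl_iff] at hx1 hx2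
      obtain ⟨i, _, hxi⟩ := hx1
      obtain ⟨j, _, hxj⟩ := hx2
      have hxA : x ∈ A := hFA ▸ Set.mem_iUnion.2 ⟨j, hxj⟩
      exact hxi (by have := hGA ▸ hxA; exact Set.mem_iInter.1 this i)
  choose g hg0 hg1 hgb using key
  have hstab : ∀ k, ∃ m : ℕ, ∀ n ≥ m, g n k = A.indicator (fun _ => (1 : ℝ)) k := by
    intro k
    by_cases hk : k ∈ A
    · rw [hFA] at hk
      obtain ⟨m, hm⟩ := Set.mem_iUnion.1 hk
      refine ⟨m, fun n hn => ?_⟩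
      have hkm : k ∈ ⋃ i ∈ Finset.range (n+1), F i :=
        Set.mem_biUnion (Finset.mem_range.2 (Nat.lt_succ_of_le hn)) hm
      have := hg1 n hkm
      rw [Set.indicator_of_mem (hFA ▸ hk)]
      simpa using this
    · have hk' : k ∉ ⋂ n, G n := hGA ▸ hk
      obtain ⟨m, hm⟩ := by simpa [Set.mem_iInter] using hk'
      refine ⟨m, fun n hn => ?_⟩
      have hkm : k ∈ ⋃ i ∈ Finset.range (n+1), (G i)ᶜ :=
        Set.mem_biUnion (Finset.mem_range.2 (Nat.lt_succ_of_le hn)) hm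
      have := hg0 n hkm
      rw [Set.indicator_of_notMem hk]
      simpa using this
  refine ⟨fun n k => g n k, fun n => (g n).continuous, ⟨1, fun n k => ?_⟩, hstab, ?_⟩
  · have := hgb n k
    rw [abs_le]; constructor <;> [linarith [this.1]; exact this.2]
  · intro k
    obtain ⟨m, hm⟩ := hstab k
    exact tendsto_const_nhds.congr' (eventually_atTop.2 ⟨m, fun n hn => (hm n hn).symm⟩)
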